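/- arXiv:2410.10166 — 4 statements merged into one kernel-verified Lean document; each statement's English description precedes it below -/
import Mathlib

section
/- Let φ_1,…,φ_m ∈ ℝ^d be feature vectors spanning ℝ^d, let π be a probability distribution on {1,…,m} such that V(π) = Σ_j π(j) φ_j φ_jᵀ is invertible, and set g(π) = max_{1≤j≤m} φ_jᵀ V(π)^{-1} φ_j. Fix ε > 0 and δ ∈ (0,1), and for each j let n(j) = ⌈(2 π(j) g(π) / ε²)·log(1/δ)⌉. Then the matrix V = Σ_{j=1}^m n(j) φ_j φ_jᵀ is positive definite and for every index j one has φ_jᵀ V^{-1} φ_j ≤ ε² / (2 log(1/δ)). -/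
open Matrix Finset

/-- The design matrix `V(w) = Σ j, w j • φ j (φ j)ᵀ` of feature vectors `φ` under
weights `w`. -/
noncomputable def designMatrix {ι : Type*} [Fintype ι] {d : ℕ} (φ : ι → Fin d → ℝ)
    (w : ι → ℝ) : Matrix (Fin d) (Fin d) ℝ :=
  ∑ j, w j • vecMulVec (φ j) (φ j)

/-- `g(w) = max_j (φ j)ᵀ V(w)⁻¹ (φ j)`. -/
noncomputable def gOpt {ι : Type*} [Fintype ι] [Nonempty ι] {d : ℕ} (φ : ι → Fin d → ℝ)
    (w : ι → ℝ) : ℝ :=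
  Finset.univ.sup' Finset.univ_nonempty (fun j => φ j ⬝ᵥ ((designMatrix φ w)⁻¹ *ᵥ φ j))

private lemma sumMulVec {ι : Type*} [Fintype ι] {d : ℕ}
    (A : ι → Matrix (Fin d) (Fin d) ℝ) (x : Fin d → ℝ) :
    (∑ j, A j) *ᵥ x = ∑ j, A j *ᵥ x := by
  ext i
  simp only [mulVec, dotProduct, Matrix.sum_apply, Finset.sum_mul, Finset.sum_apply]
  rw [Finset.sum_comm]

private lemma vecMulVecMulVec {d : ℕ} (u x : Fin d → ℝ) :
    vecMulVec u u *ᵥ x = (u ⬝ᵥ x) • u := by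
  ext i
  simp only [vecMulVec, mulVec, dotProduct, Pi.smul_apply, of_apply, smul_eq_mul,
    Finset.sum_mul, Finset.mul_sum]
  exact Finset.sum_congr rfl fun k _ => by ring

private lemma dotSum {ι : Type*} [Fintype ι] {d : ℕ} (x : Fin d → ℝ) (v : ι → Fin d → ℝ) :
    x ⬝ᵥ ∑ j, v j = ∑ j, x ⬝ᵥ v j := by
  simp only [dotProduct, Finset.sum_apply, Finset.mul_sum]
  rw [Finset.sum_comm]

private lemma quadform_sum {ι : Type*} [Fintype ι] {d : ℕ} (φ : ι → Fin d → ℝ)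
    (c : ι → ℝ) (x : Fin d → ℝ) :
    x ⬝ᵥ ((∑ j, c j • vecMulVec (φ j) (φ j)) *ᵥ x) = ∑ j, c j * (φ j ⬝ᵥ x) ^ 2 := by
  rw [sumMulVec fun j => c j • vecMulVec (φ j) (φ j), dotSum]
  refine Finset.sum_congr rfl fun j _ => ?_
  rw [smul_mulVec, vecMulVecMulVec, dotProduct_smul, dotProduct_smul]
  rw [smul_eq_mul, smul_eq_mul, dotProduct_comm x (φ j)]
  ring

private lemma isHermitian_sum {ι : Type*} [Fintype ι] {d : ℕ} (φ : ι → Fin d → ℝ)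
    (c : ι → ℝ) : (∑ j, c j • vecMulVec (φ j) (φ j)).IsHermitian := by
  unfold Matrix.IsHermitian
  rw [conjTranspose_sum]
  refine Finset.sum_congr rfl fun j _ => ?_
  rw [conjTranspose_smul]
  have h1 : (vecMulVec (φ j) (φ j))ᴴ = vecMulVec (φ j) (φ j) := by
    ext i k; simp [vecMulVec, conjTranspose_apply, mul_comm]
  rw [h1]
  simp

/-- Cauchy–Schwarz for a positive semidefinite bilinear form. -/
private lemma cs_psd {d : ℕ} {W : Matrix (Fin d) (Fin d) ℝ} (hW : W.PosSemidef)
    (y z : Fin d → ℝ) :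
    (y ⬝ᵥ (W *ᵥ z)) ^ 2 ≤ (y ⬝ᵥ (W *ᵥ y)) * (z ⬝ᵥ (W *ᵥ z)) := by
  have hsym : ∀ a b : Fin d → ℝ, a ⬝ᵥ (W *ᵥ b) = b ⬝ᵥ (W *ᵥ a) := by
    intro a b
    have hWsymm : Wᵀ = W := by
      have := hW.1
      rwa [Matrix.IsHermitian, conjTranspose_eq_transpose_of_trivial] at this
    rw [Matrix.dotProduct_mulVec, ← Matrix.mulVec_transpose, hWsymm, dotProduct_comm]
  have hnn : ∀ a : Fin d → ℝ, 0 ≤ a ⬝ᵥ (W *ᵥ a) := by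
    intro a; simpa using hW.dotProduct_mulVec_nonneg a
  have key : discrim (z ⬝ᵥ (W *ᵥ z)) (2 * (y ⬝ᵥ (W *ᵥ z))) (y ⬝ᵥ (W *ᵥ y)) ≤ 0 := by
    apply discrim_le_zero
    intro t
    have h0 := hnn (y + t • z)
    have expand : (y + t • z) ⬝ᵥ (W *ᵥ (y + t • z)) =
        (z ⬝ᵥ (W *ᵥ z)) * t ^ 2 + 2 * (y ⬝ᵥ (W *ᵥ z)) * t + (y ⬝ᵥ (W *ᵥ y)) := by
      rw [mulVec_add, dotProduct_add, add_dotProduct, add_dotProduct,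
        mulVec_smul, dotProduct_smul, smul_dotProduct, smul_dotProduct,
        dotProduct_smul, hsym z y]
      simp only [smul_eq_mul]
      ring
    linarith [expand ▸ h0]
  rw [discrim] at key
  nlinarith [key]

/-- Monotonicity of the inverse quadratic form. -/
private lemma inv_quadform_mono {d : ℕ} {A W : Matrix (Fin d) (Fin d) ℝ}
    (hA : A.PosDef) (hW : W.PosDef)
    (h : ∀ x, x ⬝ᵥ (W *ᵥ x) ≤ x ⬝ᵥ (A *ᵥ x)) (x : Fin d → ℝ) :
    x ⬝ᵥ (A⁻¹ *ᵥ x) ≤ x ⬝ᵥ (W⁻¹ *ᵥ x) := by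
  set y := A⁻¹ *ᵥ x with hy
  set z := W⁻¹ *ᵥ x with hz
  have hAy : A *ᵥ y = x := by
    rw [hy, mulVec_mulVec, Matrix.mul_nonsing_inv _ hA.det_pos.ne'.isUnit, one_mulVec]
  have hWz : W *ᵥ z = x := by
    rw [hz, mulVec_mulVec, Matrix.mul_nonsing_inv _ hW.det_pos.ne'.isUnit, one_mulVec]
  have hs0 : 0 ≤ x ⬝ᵥ y := by simpa using hA.inv.posSemidef.dotProduct_mulVec_nonneg x
  have ht0 : 0 ≤ x ⬝ᵥ z := by simpa using hW.inv.posSemidef.dotProduct_mulVec_nonneg x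
  have hcs := cs_psd hW.posSemidef y z
  rw [hWz] at hcs
  have h1 : y ⬝ᵥ x = x ⬝ᵥ y := dotProduct_comm _ _
  have h2 : y ⬝ᵥ (W *ᵥ y) ≤ x ⬝ᵥ y := by
    have := h y
    rwa [hAy, dotProduct_comm y x] at this
  rw [h1, dotProduct_comm z x] at hcs
  have hWy0 : 0 ≤ y ⬝ᵥ (W *ᵥ y) := by simpa using hW.posSemidef.dotProduct_mulVec_nonneg y
  nlinarith [hcs, mul_le_mul_of_nonneg_right h2 ht0, hs0, ht0, hWy0]

/-- **Sample allocation from a design controls all quadratic forms.**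
Let `φ 1, …, φ m ∈ ℝ^d` span `ℝ^d`, let `w` be a probability distribution on `{1, …, m}`
with `V(w) = Σ j, w j • φ j (φ j)ᵀ` invertible, and set
`g(w) = max_j (φ j)ᵀ V(w)⁻¹ (φ j)`. Fix `ε > 0` and `δ ∈ (0,1)`, and for each `j` let
`n j = ⌈(2 w j g(w) / ε²) log(1/δ)⌉`. Then `V = Σ j, n j • φ j (φ j)ᵀ` is positive
definite and `(φ j)ᵀ V⁻¹ (φ j) ≤ ε² / (2 log(1/δ))` for every `j`. -/
theorem design_allocation_quadratic_form_bound
    {ι : Type*} [Fintype ι] [Nonempty ι] {d : ℕ} (φ : ι → Fin d → ℝ)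
    (hspan : Submodule.span ℝ (Set.range φ) = ⊤)
    (w : ι → ℝ) (hw0 : ∀ j, 0 ≤ w j) (hw1 : ∑ j, w j = 1)
    (hVw : IsUnit (designMatrix φ w).det)
    (ε δ : ℝ) (hε : 0 < ε) (hδ0 : 0 < δ) (hδ1 : δ < 1)
    (n : ι → ℕ) (hn : ∀ j, n j = ⌈2 * w j * gOpt φ w / ε ^ 2 * Real.log (1 / δ)⌉₊)
    (V : Matrix (Fin d) (Fin d) ℝ)
    (hV : V = ∑ j, (n j : ℝ) • vecMulVec (φ j) (φ j)) :
    V.PosDef ∧ ∀ j, φ j ⬝ᵥ (V⁻¹ *ᵥ φ j) ≤ ε ^ 2 / (2 * Real.log (1 / δ)) := by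
  have hL : 0 < Real.log (1 / δ) := Real.log_pos (one_lt_one_div hδ0 hδ1)
  set L := Real.log (1 / δ) with hLdef
  by_cases hφ : ∀ j, φ j = 0
  · -- degenerate case: all features are zero, hence the space is trivial
    have htriv : ∀ x : Fin d → ℝ, x = 0 := by
      intro x
      have hx : x ∈ Submodule.span ℝ (Set.range φ) := hspan ▸ Submodule.mem_top
      have hrange : Set.range φ ⊆ {0} := by
        rintro _ ⟨j, rfl⟩; simp [hφ j]
      have : Submodule.span ℝ (Set.range φ) ≤ ⊥ := by
        rw [← Submodule.span_zero_singleton (M := Fin d → ℝ) (R := ℝ)]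
        exact Submodule.span_mono hrange
      simpa using this hx
    have hV0 : V = 0 := by
      rw [hV]
      refine Finset.sum_eq_zero fun j _ => ?_
      have hvv : vecMulVec (0 : Fin d → ℝ) (0 : Fin d → ℝ) = (0 : Matrix (Fin d) (Fin d) ℝ) := by
        ext i k; simp [vecMulVec]
      rw [hφ j, hvv, smul_zero]
    constructor
    · refine PosDef.of_dotProduct_mulVec_pos (by simp [hV0]) fun x hx => absurd (htriv x) hx
    · intro j
      rw [hφ j]
      simp only [zero_dotProduct]
      positivity
  · push_neg at hφ
    obtain ⟨j₀, hj₀⟩ := hφ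
    set W := designMatrix φ w with hWdef
    have hWherm : W.IsHermitian := isHermitian_sum φ w
    have hWquad : ∀ x, x ⬝ᵥ (W *ᵥ x) = ∑ j, w j * (φ j ⬝ᵥ x) ^ 2 := fun x =>
      quadform_sum φ w x
    have hWpsd : W.PosSemidef := by
      refine PosSemidef.of_dotProduct_mulVec_nonneg hWherm fun x => ?_
      simp only [star_trivial]
      rw [hWquad x]
      exact Finset.sum_nonneg fun j _ => mul_nonneg (hw0 j) (sq_nonneg _)
    have hWunit : IsUnit W := (Matrix.isUnit_iff_isUnit_det W).2 hVw
    have hWpd : W.PosDef := by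
      refine PosDef.of_dotProduct_mulVec_pos hWherm fun x hx => ?_
      rcases lt_or_eq_of_le (hWpsd.dotProduct_mulVec_nonneg x) with h | h
      · exact h
      · exfalso
        have h0 : star x ⬝ᵥ (W *ᵥ x) = 0 := h.symm
        have := (hWpsd.dotProduct_mulVec_zero_iff x).1 h0
        exact hx (Matrix.mulVec_injective_iff_isUnit.2 hWunit
          (by simpa using this : W *ᵥ x = W *ᵥ 0))
    have hWinv : W⁻¹.PosDef := hWpd.inv
    set g := gOpt φ w with hgdef
    have hg_le : ∀ j, φ j ⬝ᵥ (W⁻¹ *ᵥ φ j) ≤ g := fun j =>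
      Finset.le_sup' (fun j => φ j ⬝ᵥ ((designMatrix φ w)⁻¹ *ᵥ φ j)) (Finset.mem_univ j)
    have hgpos : 0 < g := by
      have := hWinv.dotProduct_mulVec_pos hj₀
      simp only [star_trivial] at this
      exact lt_of_lt_of_le this (hg_le j₀)
    set c := 2 * L / ε ^ 2 with hcdef
    have hcpos : 0 < c := by positivity
    have hcg : 0 < c * g := mul_pos hcpos hgpos
    have hn' : ∀ j, c * g * w j ≤ (n j : ℝ) := by
      intro j
      rw [hn j]
      calc c * g * w j = 2 * w j * g / ε ^ 2 * L := by rw [hcdef]; ring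
        _ ≤ _ := Nat.le_ceil _
    -- quadratic form comparison
    have hVquad : ∀ x, x ⬝ᵥ (V *ᵥ x) = ∑ j, (n j : ℝ) * (φ j ⬝ᵥ x) ^ 2 := by
      intro x; rw [hV]; exact quadform_sum φ (fun j => (n j : ℝ)) x
    have hcomp : ∀ x, c * g * (x ⬝ᵥ (W *ᵥ x)) ≤ x ⬝ᵥ (V *ᵥ x) := by
      intro x
      rw [hVquad x, hWquad x, Finset.mul_sum]
      refine Finset.sum_le_sum fun j _ => ?_
      rw [← mul_assoc]
      exact mul_le_mul_of_nonneg_right (hn' j) (sq_nonneg _)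
    set B := (c * g) • W with hBdef
    have hBpd : B.PosDef := by
      refine PosDef.of_dotProduct_mulVec_pos ?_ fun x hx => ?_
      · unfold Matrix.IsHermitian
        rw [hBdef, conjTranspose_smul, hWherm.eq]
        simp
      · rw [hBdef, smul_mulVec, dotProduct_smul, smul_eq_mul]
        exact mul_pos hcg (by simpa using hWpd.dotProduct_mulVec_pos hx)
    have hBcomp : ∀ x, x ⬝ᵥ (B *ᵥ x) ≤ x ⬝ᵥ (V *ᵥ x) := by
      intro x
      rw [hBdef, smul_mulVec, dotProduct_smul, smul_eq_mul]
      exact hcomp x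
    have hVpd : V.PosDef := by
      refine PosDef.of_dotProduct_mulVec_pos ?_ fun x hx => ?_
      · rw [hV]; exact isHermitian_sum φ _
      · simp only [star_trivial]
        exact lt_of_lt_of_le (by simpa using hBpd.dotProduct_mulVec_pos hx) (hBcomp x)
    refine ⟨hVpd, fun j => ?_⟩
    have hmono := inv_quadform_mono hVpd hBpd hBcomp (φ j)
    have hBinv : B⁻¹ = (c * g)⁻¹ • W⁻¹ := by
      rw [hBdef]
      haveI : Invertible (c * g) := invertibleOfNonzero hcg.ne'
      rw [Matrix.inv_smul (A := W) (c * g) hVw, invOf_eq_inv (c * g)]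
    rw [hBinv, smul_mulVec, dotProduct_smul, smul_eq_mul] at hmono
    have hfinal : (c * g)⁻¹ * (φ j ⬝ᵥ (W⁻¹ *ᵥ φ j)) ≤ (c * g)⁻¹ * g :=
      mul_le_mul_of_nonneg_left (hg_le j) (inv_nonneg.2 hcg.le)
    have heq : (c * g)⁻¹ * g = ε ^ 2 / (2 * L) := by
      rw [hcdef]
      field_simp
    calc φ j ⬝ᵥ (V⁻¹ *ᵥ φ j) ≤ (c * g)⁻¹ * (φ j ⬝ᵥ (W⁻¹ *ᵥ φ j)) := hmono
      _ ≤ (c * g)⁻¹ * g := hfinal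
      _ = ε ^ 2 / (2 * L) := heq
end

section
/- (Kiefer–Wolfowitz) Let φ_1,…,φ_m ∈ ℝ^d be feature vectors spanning ℝ^d, and let π* be a probability distribution on {1,…,m} such that V(π*) = Σ_j π*(j) φ_j φ_jᵀ is invertible. Then the following are equivalent: (i) g(π*) ≤ g(π) for every probability distribution π on {1,…,m} with V(π) invertible (π* minimizes g); (ii) det V(π*) ≥ det V(π) for every probability distribution π on {1,…,m} (π* maximizes log det V); (iii) g(π*) = d. -/
open Matrix Finset

section aux
variable {ι : Type*} [Fintype ι] [Nonempty ι] [DecidableEq ι] {d : ℕ} (φ : ι → Fin d → ℝ)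

lemma trace_mul_vecMulVec (B : Matrix (Fin d) (Fin d) ℝ) (u v : Fin d → ℝ) :
    trace (B * vecMulVec u v) = v ⬝ᵥ (B *ᵥ u) := by
  simp only [trace, diag_apply, mul_apply, vecMulVec_apply, dotProduct, mulVec, Finset.mul_sum]
  exact Finset.sum_congr rfl fun i _ => Finset.sum_congr rfl fun k _ => by ring

lemma trace_mul_designMatrix (B : Matrix (Fin d) (Fin d) ℝ) (w : ι → ℝ) :
    trace (B * designMatrix φ w) = ∑ j, w j * (φ j ⬝ᵥ (B *ᵥ φ j)) := by
  simp only [designMatrix, Matrix.mul_sum, Matrix.mul_smul, trace_sum, trace_smul,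
    trace_mul_vecMulVec, smul_eq_mul]

lemma sum_w_q (w : ι → ℝ) (hw1 : ∑ j, w j = 1) (h : IsUnit (designMatrix φ w).det) :
    ∑ j, w j * (φ j ⬝ᵥ ((designMatrix φ w)⁻¹ *ᵥ φ j)) = d := by
  have h2 := congrArg trace (nonsing_inv_mul _ h)
  rw [trace_one, trace_mul_designMatrix] at h2
  simpa using h2

lemma designMatrix_mulVec (w : ι → ℝ) (x : Fin d → ℝ) :
    designMatrix φ w *ᵥ x = ∑ j, (w j * (φ j ⬝ᵥ x)) • φ j := by
  funext i
  simp only [designMatrix, mulVec, dotProduct, Finset.sum_apply, Matrix.sum_apply,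
    Matrix.smul_apply, vecMulVec_apply, smul_eq_mul, Pi.smul_apply, Finset.mul_sum,
    Finset.sum_mul]
  rw [Finset.sum_comm]
  exact Finset.sum_congr rfl fun j _ => Finset.sum_congr rfl fun k _ => by ring

lemma dot_designMatrix (w : ι → ℝ) (x : Fin d → ℝ) :
    x ⬝ᵥ (designMatrix φ w *ᵥ x) = ∑ j, w j * (φ j ⬝ᵥ x) ^ 2 := by
  rw [designMatrix_mulVec]
  simp only [dotProduct, Finset.sum_apply, Pi.smul_apply, smul_eq_mul, Finset.mul_sum]
  rw [Finset.sum_comm]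
  refine Finset.sum_congr rfl fun j _ => ?_
  have h : ∀ c : ℝ, (∑ i, x i * (c * φ j i)) = c * ∑ i, φ j i * x i := fun c => by
    rw [Finset.mul_sum]; exact Finset.sum_congr rfl fun i _ => by ring
  rw [← Finset.mul_sum, h]; ring


lemma designMatrix_isHermitian (w : ι → ℝ) : (designMatrix φ w).IsHermitian := by
  show (designMatrix φ w)ᴴ = designMatrix φ w
  ext i k
  simp only [conjTranspose_apply, designMatrix, Matrix.sum_apply, Matrix.smul_apply,
    vecMulVec_apply, smul_eq_mul, star_trivial]
  exact Finset.sum_congr rfl fun j _ => by ring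

lemma designMatrix_posSemidef {w : ι → ℝ} (hw : ∀ j, 0 ≤ w j) :
    (designMatrix φ w).PosSemidef := by
  refine PosSemidef.of_dotProduct_mulVec_nonneg (designMatrix_isHermitian φ w) fun x => ?_
  have : star x = x := by funext i; simp
  rw [this, dot_designMatrix]
  exact Finset.sum_nonneg fun j _ => mul_nonneg (hw j) (sq_nonneg _)

lemma posDef_of_isUnit_det {n : Type*} [Fintype n] [DecidableEq n]
    {M : Matrix n n ℝ} (hM : M.PosSemidef) (h : IsUnit M.det) : M.PosDef := by
  refine PosDef.of_dotProduct_mulVec_pos hM.1 fun x hx => (hM.dotProduct_mulVec_nonneg x).lt_of_ne fun h0 => hx ?_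
  have hker : M *ᵥ x = 0 := (hM.dotProduct_mulVec_zero_iff x).mp h0.symm
  calc x = (M⁻¹ * M) *ᵥ x := by rw [nonsing_inv_mul _ h, one_mulVec]
  _ = M⁻¹ *ᵥ (M *ᵥ x) := by rw [← mulVec_mulVec]
  _ = 0 := by rw [hker, mulVec_zero]

lemma q_nonneg {w : ι → ℝ} (hw : ∀ j, 0 ≤ w j) (u : Fin d → ℝ) :
    0 ≤ u ⬝ᵥ ((designMatrix φ w)⁻¹ *ᵥ u) := by
  have h := ((designMatrix_posSemidef φ hw).inv).dotProduct_mulVec_nonneg u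
  have hs : star u = u := by funext i; simp
  rwa [hs] at h

lemma le_gOpt {w : ι → ℝ} (hw0 : ∀ j, 0 ≤ w j) (hw1 : ∑ j, w j = 1)
    (h : IsUnit (designMatrix φ w).det) : (d : ℝ) ≤ gOpt φ w := by
  rw [← sum_w_q φ w hw1 h]
  calc ∑ j, w j * (φ j ⬝ᵥ ((designMatrix φ w)⁻¹ *ᵥ φ j))
      ≤ ∑ j, w j * gOpt φ w := by
        refine Finset.sum_le_sum fun j _ => mul_le_mul_of_nonneg_left ?_ (hw0 j)
        exact Finset.le_sup' (fun j => φ j ⬝ᵥ ((designMatrix φ w)⁻¹ *ᵥ φ j))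
          (Finset.mem_univ j)
    _ = gOpt φ w := by rw [← Finset.sum_mul, hw1, one_mul]

lemma designMatrix_segment (w v : ι → ℝ) (t : ℝ) :
    designMatrix φ (fun i => (1 - t) * w i + t * v i)
      = (1 - t) • designMatrix φ w + t • designMatrix φ v := by
  simp only [designMatrix, add_smul, Finset.sum_add_distrib, Finset.smul_sum, smul_smul]

lemma designMatrix_single (j : ι) :
    designMatrix φ (fun i => if i = j then (1:ℝ) else 0) = vecMulVec (φ j) (φ j) := by
  simp only [designMatrix, ite_smul, one_smul, zero_smul]
  rw [Finset.sum_ite_eq' univ j (fun i => vecMulVec (φ i) (φ i))]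
  simp

omit [Nonempty ι] [DecidableEq ι] in
lemma det_one_add_row_mul_col {κ : Type*} [Unique κ] [Fintype κ] [DecidableEq κ]
    (B : Matrix (Fin d) (Fin d) ℝ) (v u : Fin d → ℝ) :
    (1 + replicateRow κ v * B * replicateCol κ u).det = 1 + v ⬝ᵥ (B *ᵥ u) := by
  rw [det_unique]
  simp only [Matrix.add_apply, Matrix.one_apply_eq, mul_apply, replicateRow_apply, replicateCol_apply,
    dotProduct, mulVec, Finset.mul_sum]
  congr 1
  rw [Finset.sum_comm]
  refine Finset.sum_congr rfl fun i _ => ?_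
  rw [Finset.sum_mul]
  exact Finset.sum_congr rfl fun k _ => by ring

lemma det_segment {w : ι → ℝ} (j : ι) {t : ℝ} (ht1 : t < 1)
    (hdet : IsUnit (designMatrix φ w).det) :
    (designMatrix φ (fun i => (1 - t) * w i + t * (if i = j then 1 else 0))).det
      = (1 - t) ^ d * ((designMatrix φ w).det
          * (1 + (t / (1 - t)) * (φ j ⬝ᵥ ((designMatrix φ w)⁻¹ *ᵥ φ j)))) := by
  have h1t : (1:ℝ) - t ≠ 0 := sub_ne_zero.mpr (by linarith)
  rw [designMatrix_segment, designMatrix_single]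
  have hfac : (1 - t) • designMatrix φ w + t • vecMulVec (φ j) (φ j)
      = (1 - t) • (designMatrix φ w + (t / (1 - t)) • vecMulVec (φ j) (φ j)) := by
    rw [smul_add, smul_smul, mul_div_cancel₀ _ h1t]
  rw [hfac, det_smul, Fintype.card_fin]
  congr 1
  have hvv : (t / (1 - t)) • vecMulVec (φ j) (φ j)
      = replicateCol (Fin 1) ((t / (1 - t)) • φ j) * replicateRow (Fin 1) (φ j) := by
    refine Eq.trans ?_ (vecMulVec_eq (ι := Fin 1) _ _)
    ext i k
    simp [vecMulVec_apply, mul_assoc]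
  rw [hvv, det_add_mul _ _ hdet,
    det_one_add_row_mul_col, mulVec_smul, dotProduct_smul]
  simp [smul_eq_mul]

lemma key_ineq {q : ℝ} {d : ℕ} (hd : 1 ≤ d) (hq : (d : ℝ) < q)
    (h : ∀ t : ℝ, 0 < t → t ≤ 1/2 → (1 - t) ^ (d - 1) * (1 + (q - 1) * t) ≤ 1) :
    False := by
  have hd1 : (0:ℝ) ≤ (d:ℝ) - 1 := by
    have : (1:ℝ) ≤ (d:ℝ) := by exact_mod_cast hd
    linarith
  have hq1 : (0:ℝ) < q - 1 := by linarith
  set c : ℝ := ((d:ℝ) - 1) * (q - 1) with hc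
  have hc0 : 0 ≤ c := mul_nonneg hd1 (le_of_lt hq1)
  have hqd : (0:ℝ) < q - (d:ℝ) := by linarith
  set t : ℝ := (q - d) / (c + 2 * (q - d)) with htdef
  have hden : (0:ℝ) < c + 2 * (q - d) := by linarith
  have ht0 : 0 < t := div_pos hqd hden
  have ht2 : t ≤ 1/2 := by
    rw [div_le_iff₀ hden]; linarith
  have hber : 1 - ((d:ℝ) - 1) * t ≤ (1 - t) ^ (d - 1) := by
    have := one_add_mul_le_pow (a := -t) (by linarith) (d - 1)
    have hcast : ((d - 1 : ℕ) : ℝ) = (d:ℝ) - 1 := by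
      push_cast [Nat.cast_sub hd]; ring
    rw [hcast] at this
    calc 1 - ((d:ℝ) - 1) * t = 1 + ((d:ℝ) - 1) * (-t) := by ring
    _ ≤ (1 + -t) ^ (d - 1) := this
    _ = (1 - t) ^ (d - 1) := by ring_nf
  have hpos : (0:ℝ) ≤ 1 + (q - 1) * t := by nlinarith
  have hmain := h t ht0 ht2
  have hlb : (1 - ((d:ℝ) - 1) * t) * (1 + (q - 1) * t) ≤ 1 :=
    le_trans (mul_le_mul_of_nonneg_right hber hpos) hmain
  have hexp : (1 - ((d:ℝ) - 1) * t) * (1 + (q - 1) * t) = 1 + (q - d) * t - c * t ^ 2 := by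
    rw [hc]; ring
  rw [hexp] at hlb
  -- so (q - d) * t ≤ c * t^2, i.e. q - d ≤ c * t
  have hct : q - (d:ℝ) ≤ c * t := by
    have h2 : (q - d) * t ≤ (c * t) * t := by nlinarith
    exact le_of_mul_le_mul_right (by linarith [h2]) ht0
  have htd : t * (c + 2 * (q - d)) = q - d := by
    rw [htdef]; field_simp
  have h3 : (q - d) * (c + 2*(q-d)) ≤ c * t * (c + 2*(q-d)) :=
    mul_le_mul_of_nonneg_right hct hden.le
  nlinarith [h3, htd, hqd, mul_pos hqd hqd, hc0]

lemma gOpt_eq_of_detmax {u : ι → ℝ} (hu0 : ∀ j, 0 ≤ u j) (hu1 : ∑ j, u j = 1)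
    (hdet : IsUnit (designMatrix φ u).det)
    (hmax : ∀ w : ι → ℝ, (∀ j, 0 ≤ w j) → ∑ j, w j = 1 →
      (designMatrix φ w).det ≤ (designMatrix φ u).det) :
    gOpt φ u = d := by
  have hdpos : 0 < (designMatrix φ u).det :=
    (posDef_of_isUnit_det (designMatrix_posSemidef φ hu0) hdet).det_pos
  have hqle : ∀ j, φ j ⬝ᵥ ((designMatrix φ u)⁻¹ *ᵥ φ j) ≤ (d : ℝ) := by
    intro j
    rcases Nat.eq_zero_or_pos d with hd0 | hd
    · subst hd0
      simp [dotProduct]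
    by_contra hgt
    push_neg at hgt
    set q := φ j ⬝ᵥ ((designMatrix φ u)⁻¹ *ᵥ φ j) with hqdef
    refine key_ineq hd hgt fun t ht0 ht2 => ?_
    have ht1 : t < 1 := by linarith
    have h1t : (0:ℝ) < 1 - t := by linarith
    set wt : ι → ℝ := fun i => (1 - t) * u i + t * (if i = j then 1 else 0) with hwt
    have hwt0 : ∀ i, 0 ≤ wt i := fun i => by
      have : (0:ℝ) ≤ (if i = j then (1:ℝ) else 0) := by positivity
      have := mul_nonneg ht0.le this
      have := mul_nonneg h1t.le (hu0 i)
      simp only [hwt]; linarith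
    have hwt1 : ∑ i, wt i = 1 := by
      simp only [hwt]
      rw [Finset.sum_add_distrib, ← Finset.mul_sum, ← Finset.mul_sum, hu1,
        Finset.sum_ite_eq' univ j (fun _ => (1:ℝ))]
      simp
    have hle := hmax wt hwt0 hwt1
    rw [hwt, det_segment φ j ht1 hdet] at hle
    -- divide by det
    have hkey : (1 - t) ^ d * (1 + t / (1 - t) * q) ≤ 1 := by
      rw [← mul_le_mul_iff_left₀ hdpos]
      calc (1 - t) ^ d * (1 + t / (1 - t) * q) * (designMatrix φ u).det
          = (1 - t) ^ d * ((designMatrix φ u).det * (1 + t / (1 - t) * q)) := by ring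
        _ ≤ (designMatrix φ u).det := hle
        _ = 1 * (designMatrix φ u).det := by ring
    have hpow : (1 - t) ^ d = (1 - t) ^ (d - 1) * (1 - t) := by
      conv_lhs => rw [← Nat.sub_add_cancel hd]
      rw [pow_succ]
    have hmul : (1 - t) * (1 + t / (1 - t) * q) = 1 + (q - 1) * t := by
      field_simp
      ring
    calc (1 - t) ^ (d - 1) * (1 + (q - 1) * t)
        = (1 - t) ^ d * (1 + t / (1 - t) * q) := by
          rw [hpow, mul_assoc, hmul]
      _ ≤ 1 := hkey
  have h1 : gOpt φ u ≤ d := by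
    unfold gOpt
    exact Finset.sup'_le _ _ fun j _ => hqle j
  exact le_antisymm h1 (le_gOpt φ hu0 hu1 hdet)

omit [Nonempty ι] [DecidableEq ι] [Fintype ι] in
lemma trace_eq_sum_eigenvalues {n : Type*} [Fintype n] [DecidableEq n]
    {C : Matrix n n ℝ} (hC : C.IsHermitian) :
    trace C = ∑ i, hC.eigenvalues i := by
  simpa using hC.trace_eq_sum_eigenvalues

omit [Nonempty ι] [DecidableEq ι] [Fintype ι] in
lemma psd_det_le_one {C : Matrix (Fin d) (Fin d) ℝ} (hC : C.PosSemidef)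
    (htr : trace C ≤ (d : ℝ)) : C.det ≤ 1 := by
  rcases Nat.eq_zero_or_pos d with hd0 | hd
  · subst hd0; rw [Matrix.det_fin_zero]
  have hdR : (0:ℝ) < d := by exact_mod_cast hd
  set lam := hC.1.eigenvalues with hlam
  have hnn : ∀ i, 0 ≤ lam i := fun i => hC.eigenvalues_nonneg i
  have hdet : C.det = ∏ i, lam i := by
    have := hC.1.det_eq_prod_eigenvalues
    simpa using this
  have hsum : ∑ i, lam i = trace C := (trace_eq_sum_eigenvalues hC.1).symm
  have hAMGM := Real.geom_mean_le_arith_mean_weighted Finset.univ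
    (fun _ : Fin d => (d:ℝ)⁻¹) lam (fun i _ => by positivity)
    (by simp [Finset.card_univ]; field_simp) (fun i _ => hnn i)
  set P := ∏ i, lam i ^ ((d:ℝ)⁻¹) with hP
  have hP0 : 0 ≤ P := Finset.prod_nonneg fun i _ => Real.rpow_nonneg (hnn i) _
  have hP1 : P ≤ 1 := by
    refine le_trans hAMGM ?_
    rw [← Finset.mul_sum, hsum]
    calc (d:ℝ)⁻¹ * trace C ≤ (d:ℝ)⁻¹ * d := by
          exact mul_le_mul_of_nonneg_left htr (by positivity)
      _ = 1 := by field_simp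
  have hPd : P ^ d = ∏ i, lam i := by
    rw [hP, ← Finset.prod_pow]
    refine Finset.prod_congr rfl fun i _ => ?_
    rw [← Real.rpow_natCast (lam i ^ ((d:ℝ)⁻¹)) d, ← Real.rpow_mul (hnn i)]
    rw [inv_mul_cancel₀ (ne_of_gt hdR), Real.rpow_one]
  rw [hdet, ← hPd]
  exact pow_le_one₀ hP0 hP1

omit [Nonempty ι] [DecidableEq ι] [Fintype ι] in
open scoped MatrixOrder in
lemma det_le_of_trace_le {A B : Matrix (Fin d) (Fin d) ℝ} (hA : A.PosDef)
    (hB : B.PosSemidef) (htr : trace (A⁻¹ * B) ≤ (d:ℝ)) : B.det ≤ A.det := by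
  set S := CFC.sqrt A with hSdef
  have hS : S.PosSemidef := (CFC.sqrt_nonneg A).posSemidef
  have hSS : S * S = A := CFC.sqrt_mul_sqrt_self A hA.posSemidef.nonneg
  have hdetS : S.det * S.det = A.det := by rw [← det_mul, hSS]
  have hdetA : 0 < A.det := hA.det_pos
  have hdetS0 : S.det ≠ 0 := fun h => by rw [h, mul_zero] at hdetS; linarith
  have hSinv : (S⁻¹)ᴴ = S⁻¹ := by rw [conjTranspose_nonsing_inv, hS.1.eq]
  set C := S⁻¹ * B * S⁻¹ with hCdef
  have hC : C.PosSemidef := by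
    have := hB.mul_mul_conjTranspose_same (S⁻¹)
    rwa [hSinv] at this
  have htrC : trace C ≤ (d:ℝ) := by
    rw [hCdef, Matrix.trace_mul_comm, ← mul_assoc, ← Matrix.mul_inv_rev, hSS]
    exact htr
  have hdetC : C.det ≤ 1 := psd_det_le_one hC htrC
  have hdetCB : C.det = S⁻¹.det * B.det * S⁻¹.det := by
    rw [hCdef, det_mul, det_mul]
  have hSinvdet : S⁻¹.det = (S.det)⁻¹ := by
    rw [det_nonsing_inv, Ring.inverse_eq_inv]
  calc B.det = C.det * A.det := by
        rw [hdetCB, hSinvdet, ← hdetS]; field_simp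
    _ ≤ 1 * A.det := mul_le_mul_of_nonneg_right hdetC hdetA.le
    _ = A.det := one_mul _

lemma detmax_of_gOpt_eq {ws : ι → ℝ} (hws0 : ∀ j, 0 ≤ ws j)
    (hVs : IsUnit (designMatrix φ ws).det) (hg : gOpt φ ws = d)
    (w : ι → ℝ) (hw0 : ∀ j, 0 ≤ w j) (hw1 : ∑ j, w j = 1) :
    (designMatrix φ w).det ≤ (designMatrix φ ws).det := by
  have hA : (designMatrix φ ws).PosDef :=
    posDef_of_isUnit_det (designMatrix_posSemidef φ hws0) hVs
  have hB : (designMatrix φ w).PosSemidef := designMatrix_posSemidef φ hw0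
  apply det_le_of_trace_le hA hB
  rw [trace_mul_designMatrix]
  calc ∑ j, w j * (φ j ⬝ᵥ ((designMatrix φ ws)⁻¹ *ᵥ φ j))
      ≤ ∑ j, w j * gOpt φ ws := by
        refine Finset.sum_le_sum fun j _ => mul_le_mul_of_nonneg_left ?_ (hw0 j)
        exact Finset.le_sup' (fun j => φ j ⬝ᵥ ((designMatrix φ ws)⁻¹ *ᵥ φ j))
          (Finset.mem_univ j)
    _ = gOpt φ ws := by rw [← Finset.sum_mul, hw1, one_mul]
    _ = (d : ℝ) := hg

lemma exists_detmax (hspan : Submodule.span ℝ (Set.range φ) = ⊤) :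
    ∃ v : ι → ℝ, (∀ j, 0 ≤ v j) ∧ ∑ j, v j = 1 ∧ IsUnit (designMatrix φ v).det ∧
      ∀ w : ι → ℝ, (∀ j, 0 ≤ w j) → ∑ j, w j = 1 →
        (designMatrix φ w).det ≤ (designMatrix φ v).det := by
  have hcard : 0 < Fintype.card ι := Fintype.card_pos
  set u : ι → ℝ := fun _ => (Fintype.card ι : ℝ)⁻¹ with hu
  have hu0 : ∀ j, 0 ≤ u j := fun j => by positivity
  have hu1 : ∑ j, u j = 1 := by
    simp only [hu, Finset.sum_const, Finset.card_univ, nsmul_eq_mul]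
    field_simp
  have hall : ∀ x : Fin d → ℝ, (∀ j, φ j ⬝ᵥ x = 0) → x = 0 := by
    intro x hj
    have hy : ∀ y : Fin d → ℝ, y ⬝ᵥ x = 0 := by
      intro y
      have hy : y ∈ Submodule.span ℝ (Set.range φ) := by rw [hspan]; trivial
      induction hy using Submodule.span_induction with
      | mem a ha => obtain ⟨j, rfl⟩ := ha; exact hj j
      | zero => simp
      | add a b _ _ ha hb => rw [add_dotProduct, ha, hb, add_zero]
      | smul c a _ ha => rw [smul_dotProduct, ha, smul_zero]
    exact dotProduct_self_eq_zero.mp (hy x)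
  have hupos : (designMatrix φ u).PosDef := by
    refine PosDef.of_dotProduct_mulVec_pos (designMatrix_isHermitian φ u) fun x hx => ?_
    have hst : star x = x := funext fun i => by simp
    rw [hst, dot_designMatrix]
    have hnn : ∀ j ∈ Finset.univ, (0:ℝ) ≤ u j * (φ j ⬝ᵥ x) ^ 2 :=
      fun j _ => mul_nonneg (hu0 j) (sq_nonneg _)
    rcases lt_or_ge 0 (∑ j, u j * (φ j ⬝ᵥ x) ^ 2) with h | h
    · exact h
    exfalso
    have hz := (Finset.sum_eq_zero_iff_of_nonneg hnn).mp
      (le_antisymm h (Finset.sum_nonneg hnn))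
    refine hx (hall x fun j => ?_)
    have hj := hz j (Finset.mem_univ j)
    have hu' : u j ≠ 0 := by positivity
    have := (mul_eq_zero.mp hj).resolve_left hu'
    exact pow_eq_zero_iff two_ne_zero |>.mp this
  have hcont : Continuous fun w : ι → ℝ => (designMatrix φ w).det := by
    apply Continuous.matrix_det
    show Continuous fun w : ι → ℝ => ∑ j, w j • vecMulVec (φ j) (φ j)
    exact continuous_finset_sum _ fun j _ => ((continuous_apply j).smul continuous_const)
  obtain ⟨v, hvS, hvmax⟩ := (isCompact_stdSimplex ℝ ι).exists_isMaxOn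
    ⟨u, hu0, hu1⟩ hcont.continuousOn
  obtain ⟨hv0, hv1⟩ := hvS
  have hmax : ∀ w : ι → ℝ, (∀ j, 0 ≤ w j) → ∑ j, w j = 1 →
      (designMatrix φ w).det ≤ (designMatrix φ v).det :=
    fun w h0 h1 => (isMaxOn_iff.mp hvmax) w ⟨h0, h1⟩
  have hvdet : IsUnit (designMatrix φ v).det :=
    isUnit_iff_ne_zero.mpr (lt_of_lt_of_le hupos.det_pos (hmax u hu0 hu1)).ne'
  exact ⟨v, hv0, hv1, hvdet, hmax⟩

end aux

/-- **Kiefer–Wolfowitz theorem.** Let `φ 1, …, φ m ∈ ℝ^d` span `ℝ^d` and let `ws` be a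
probability distribution on `{1, …, m}` with `V(ws)` invertible. Then the following are
equivalent: (i) `ws` minimizes `g` over probability distributions with invertible design
matrix; (ii) `ws` maximizes `det V` over probability distributions; (iii) `g(ws) = d`. -/
theorem kiefer_wolfowitz
    {ι : Type*} [Fintype ι] [Nonempty ι] {d : ℕ} (φ : ι → Fin d → ℝ)
    (hspan : Submodule.span ℝ (Set.range φ) = ⊤)
    (ws : ι → ℝ) (hws0 : ∀ j, 0 ≤ ws j) (hws1 : ∑ j, ws j = 1)
    (hVs : IsUnit (designMatrix φ ws).det) :
    ((∀ w : ι → ℝ, (∀ j, 0 ≤ w j) → ∑ j, w j = 1 → IsUnit (designMatrix φ w).det →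
        gOpt φ ws ≤ gOpt φ w) ↔
      (∀ w : ι → ℝ, (∀ j, 0 ≤ w j) → ∑ j, w j = 1 →
        (designMatrix φ w).det ≤ (designMatrix φ ws).det)) ∧
    ((∀ w : ι → ℝ, (∀ j, 0 ≤ w j) → ∑ j, w j = 1 →
        (designMatrix φ w).det ≤ (designMatrix φ ws).det) ↔
      gOpt φ ws = d) := by
  classical
  have h23 : (∀ w : ι → ℝ, (∀ j, 0 ≤ w j) → ∑ j, w j = 1 →
      (designMatrix φ w).det ≤ (designMatrix φ ws).det) → gOpt φ ws = d :=
    fun h => gOpt_eq_of_detmax φ hws0 hws1 hVs h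
  have h32 : gOpt φ ws = d → ∀ w : ι → ℝ, (∀ j, 0 ≤ w j) → ∑ j, w j = 1 →
      (designMatrix φ w).det ≤ (designMatrix φ ws).det :=
    fun hg w h0 h1 => detmax_of_gOpt_eq φ hws0 hVs hg w h0 h1
  obtain ⟨v, hv0, hv1, hvdet, hvmax⟩ := exists_detmax φ hspan
  have hgv : gOpt φ v = d := gOpt_eq_of_detmax φ hv0 hv1 hvdet hvmax
  have h13 : (∀ w : ι → ℝ, (∀ j, 0 ≤ w j) → ∑ j, w j = 1 →
      IsUnit (designMatrix φ w).det → gOpt φ ws ≤ gOpt φ w) → gOpt φ ws = d := by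
    intro h1
    refine le_antisymm ?_ (le_gOpt φ hws0 hws1 hVs)
    calc gOpt φ ws ≤ gOpt φ v := h1 v hv0 hv1 hvdet
      _ = d := hgv
  have h31 : gOpt φ ws = d → ∀ w : ι → ℝ, (∀ j, 0 ≤ w j) → ∑ j, w j = 1 →
      IsUnit (designMatrix φ w).det → gOpt φ ws ≤ gOpt φ w := by
    intro hg w h0 h1 hdet
    rw [hg]
    exact le_gOpt φ h0 h1 hdet
  exact ⟨⟨fun h1 => h32 (h13 h1) , fun h2 => h31 (h23 h2)⟩, ⟨h23, h32⟩⟩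
end

section
/- Let φ_1,…,φ_m ∈ ℝ^d be feature vectors spanning ℝ^d, and let π* be a probability distribution on {1,…,m} that maximizes det V(π) over all probability distributions π on {1,…,m}, where V(π) = Σ_j π(j) φ_j φ_jᵀ. Then V(π*) is invertible and φ_jᵀ V(π*)^{-1} φ_j ≤ d for every index j ∈ {1,…,m}. -/
open Matrix Finset

private lemma vecMulVec_mulVec' {d : ℕ} (u v x : Fin d → ℝ) :
    vecMulVec u v *ᵥ x = (v ⬝ᵥ x) • u := by
  ext i
  simp only [vecMulVec_apply, mulVec, dotProduct, Pi.smul_apply, smul_eq_mul, Finset.sum_mul]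
  exact Finset.sum_congr rfl fun k _ => by ring

private lemma sum_mulVec' {ι n : Type*} [Fintype ι] [Fintype n] (M : ι → Matrix n n ℝ)
    (x : n → ℝ) : (∑ j, M j) *ᵥ x = ∑ j, M j *ᵥ x := by
  ext i
  simp only [mulVec, dotProduct, Finset.sum_apply, Matrix.sum_apply, Finset.sum_mul]
  rw [Finset.sum_comm]

private lemma designMatrix_quad {ι : Type*} [Fintype ι] {d : ℕ} (φ : ι → Fin d → ℝ)
    (w : ι → ℝ) (x : Fin d → ℝ) :
    x ⬝ᵥ ((∑ j, w j • vecMulVec (φ j) (φ j)) *ᵥ x) = ∑ j, w j * (φ j ⬝ᵥ x)^2 := by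
  rw [sum_mulVec']
  simp only [dotProduct, Finset.sum_apply, Finset.mul_sum]
  rw [Finset.sum_comm]
  refine Finset.sum_congr rfl fun j _ => ?_
  have h1 : (w j • vecMulVec (φ j) (φ j)) *ᵥ x = ((φ j ⬝ᵥ x) * w j) • φ j := by
    rw [smul_mulVec, vecMulVec_mulVec', smul_comm]
    simp [smul_smul, mul_comm]
  rw [show (∑ i, x i * ((w j • vecMulVec (φ j) (φ j)) *ᵥ x) i)
      = x ⬝ᵥ ((w j • vecMulVec (φ j) (φ j)) *ᵥ x) from rfl, h1]
  have h2 : ∀ k, x k * (((φ j ⬝ᵥ x) * w j) • φ j) k = ((φ j ⬝ᵥ x) * w j) * (φ j k * x k) := by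
    intro k; simp only [Pi.smul_apply, smul_eq_mul]; ring
  rw [show x ⬝ᵥ (((φ j ⬝ᵥ x) * w j) • φ j) = ∑ k, x k * (((φ j ⬝ᵥ x) * w j) • φ j) k from rfl,
    Finset.sum_congr rfl fun k _ => h2 k, ← Finset.mul_sum]
  simp only [dotProduct]
  ring

private lemma designMatrix_posDef {ι : Type*} [Fintype ι] [Nonempty ι] {d : ℕ}
    (φ : ι → Fin d → ℝ) (hspan : Submodule.span ℝ (Set.range φ) = ⊤) :
    Matrix.PosDef (∑ j, ((Fintype.card ι : ℝ))⁻¹ • vecMulVec (φ j) (φ j)) := by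
  rw [posDef_iff_dotProduct_mulVec]
  constructor
  · unfold Matrix.IsHermitian
    rw [conjTranspose_sum]
    refine Finset.sum_congr rfl fun j _ => ?_
    ext i k
    simp [vecMulVec_apply, mul_comm]
  · intro x hx
    rw [star_trivial, designMatrix_quad]
    have hcard : (0:ℝ) < (Fintype.card ι : ℝ) := by exact_mod_cast Fintype.card_pos
    refine Finset.sum_pos' (fun j _ => by positivity) ?_
    by_contra hall
    push_neg at hall
    have hz : ∀ j, φ j ⬝ᵥ x = 0 := by
      intro j
      have h1 := hall j (Finset.mem_univ j)
      have h2 : 0 ≤ (Fintype.card ι : ℝ)⁻¹ * (φ j ⬝ᵥ x)^2 := by positivity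
      have h3 : (Fintype.card ι : ℝ)⁻¹ * (φ j ⬝ᵥ x)^2 = 0 := le_antisymm h1 h2
      rcases mul_eq_zero.mp h3 with h | h
      · exact absurd h (by positivity)
      · exact pow_eq_zero_iff (by norm_num) |>.mp h
    apply hx
    have hy0 : ∀ y ∈ Submodule.span ℝ (Set.range φ), y ⬝ᵥ x = 0 := by
      intro y hy
      induction hy using Submodule.span_induction with
      | mem y hy => obtain ⟨j, rfl⟩ := hy; exact hz j
      | zero => simp
      | add a b _ _ ha hb => simp [add_dotProduct, ha, hb]
      | smul a y _ h => simp [smul_dotProduct, h]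
    exact dotProduct_self_eq_zero.mp (hy0 x (hspan ▸ Submodule.mem_top))

private lemma det_mix {d : ℕ} (V : Matrix (Fin d) (Fin d) ℝ) (hV : IsUnit V.det)
    (u : Fin d → ℝ) {t : ℝ} (ht : t ≠ 1) :
    ((1-t) • V + t • vecMulVec u u).det
      = (1-t)^d * V.det * (1 + t * (1-t)⁻¹ * (u ⬝ᵥ (V⁻¹ *ᵥ u))) := by
  have h1t : (1-t : ℝ) ≠ 0 := sub_ne_zero.mpr (Ne.symm ht)
  have hcol : t • vecMulVec u u = replicateCol (Fin 1) u * replicateRow (Fin 1) (t • u) := by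
    erw [← vecMulVec_eq (ι := Fin 1)]
    ext i k
    simp only [vecMulVec_apply, Pi.smul_apply, smul_eq_mul, Matrix.smul_apply]
    ring
  have hA : IsUnit ((1-t) • V).det := by
    rw [det_smul]
    exact isUnit_iff_ne_zero.mpr
      (mul_ne_zero (pow_ne_zero _ h1t) (isUnit_iff_ne_zero.mp hV))
  haveI := invertibleOfNonzero h1t
  have h11 : (1 + replicateRow (Fin 1) (t • u) * (⅟(1 - t) • V⁻¹) * replicateCol (Fin 1) u).det
      = 1 + t * (1 - t)⁻¹ * (u ⬝ᵥ V⁻¹ *ᵥ u) := by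
    rw [Matrix.mul_assoc, ← replicateCol_mulVec, replicateRow_mul_replicateCol, det_unique]
    simp only [Matrix.add_apply, Matrix.one_apply_eq, Matrix.of_apply, invOf_eq_inv,
      Matrix.smul_mulVec, dotProduct_smul, smul_dotProduct, smul_eq_mul]
    ring
  rw [hcol]
  erw [det_add_replicateCol_mul_replicateRow (ι := Fin 1) hA]
  rw [ Matrix.inv_smul (A := V) (1 - t) hV, det_smul,
    Fintype.card_fin]
  rw [mul_assoc, mul_assoc]
  exact congrArg _ (congrArg _ h11)

private lemma designMatrix_mix {ι : Type*} [Fintype ι] [DecidableEq ι] {d : ℕ}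
    (φ : ι → Fin d → ℝ) (ws : ι → ℝ) (j : ι) (t : ℝ) :
    designMatrix φ (fun j' => (1-t) * ws j' + if j' = j then t else 0)
      = (1-t) • designMatrix φ ws + t • vecMulVec (φ j) (φ j) := by
  unfold designMatrix
  simp only [add_smul, Finset.sum_add_distrib]
  congr 1
  · rw [Finset.smul_sum]
    exact Finset.sum_congr rfl fun j' _ => by rw [← smul_smul]
  · simp [ite_smul, Finset.sum_ite_eq']

/-- **A D-optimal design is a G-optimal design.** Let `φ 1, …, φ m ∈ ℝ^d` span `ℝ^d`
and let `ws` be a probability distribution on `{1, …, m}` maximizing `det V(w)` over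
probability distributions `w`, where `V(w) = Σ j, w j • φ j (φ j)ᵀ`. Then `V(ws)` is
invertible and `(φ j)ᵀ V(ws)⁻¹ (φ j) ≤ d` for every index `j`. -/
theorem det_maximizer_bounds_quadratic_forms
    {ι : Type*} [Fintype ι] [Nonempty ι] {d : ℕ} (φ : ι → Fin d → ℝ)
    (hspan : Submodule.span ℝ (Set.range φ) = ⊤)
    (ws : ι → ℝ) (hws0 : ∀ j, 0 ≤ ws j) (hws1 : ∑ j, ws j = 1)
    (hmax : ∀ w : ι → ℝ, (∀ j, 0 ≤ w j) → ∑ j, w j = 1 →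
      (designMatrix φ w).det ≤ (designMatrix φ ws).det) :
    IsUnit (designMatrix φ ws).det ∧
    ∀ j, φ j ⬝ᵥ ((designMatrix φ ws)⁻¹ *ᵥ φ j) ≤ d := by
  classical
  -- the determinant of the optimal design is positive
  have hcard : (0:ℝ) < (Fintype.card ι : ℝ) := by exact_mod_cast Fintype.card_pos
  have huni0 : ∀ j : ι, (0:ℝ) ≤ (Fintype.card ι : ℝ)⁻¹ := fun _ => by positivity
  have huni1 : ∑ _j : ι, (Fintype.card ι : ℝ)⁻¹ = 1 := by
    rw [Finset.sum_const, Finset.card_univ, nsmul_eq_mul, mul_inv_cancel₀ hcard.ne']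
  have hVpos : 0 < (designMatrix φ ws).det := by
    have h1 : 0 < (designMatrix φ (fun _ => (Fintype.card ι : ℝ)⁻¹)).det :=
      (designMatrix_posDef φ hspan).det_pos
    exact lt_of_lt_of_le h1 (hmax _ huni0 huni1)
  have hunit : IsUnit (designMatrix φ ws).det := isUnit_iff_ne_zero.mpr hVpos.ne'
  refine ⟨hunit, fun j => ?_⟩
  by_cases hd : d = 0
  · subst hd
    simp [dotProduct]
  have hd1 : (1:ℝ) ≤ (d:ℝ) := by exact_mod_cast Nat.one_le_iff_ne_zero.mpr hd
  set V := designMatrix φ ws with hVdef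
  set q := φ j ⬝ᵥ (V⁻¹ *ᵥ φ j) with hq
  by_contra hqd
  push_neg at hqd
  -- key inequality obtained from optimality
  have key : ∀ t : ℝ, 0 ≤ t → t < 1 → (1-t)^(d-1) * ((1-t) + t*q) ≤ 1 := by
    intro t ht0 ht1
    have h1t : (0:ℝ) < 1 - t := by linarith
    set w' : ι → ℝ := fun j' => (1-t) * ws j' + if j' = j then t else 0 with hw'
    have hw0 : ∀ j', 0 ≤ w' j' := by
      intro j'
      have hnn : 0 ≤ (1-t) * ws j' := mul_nonneg h1t.le (hws0 j')
      by_cases h : j' = j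
      · simp only [hw', if_pos h]; linarith
      · simp only [hw', if_neg h, add_zero]; exact hnn
    have hw1 : ∑ j', w' j' = 1 := by
      simp only [hw', Finset.sum_add_distrib, ← Finset.mul_sum, hws1,
        Finset.sum_ite_eq', Finset.mem_univ, if_true]
      ring
    have hle := hmax w' hw0 hw1
    rw [designMatrix_mix φ ws j t, det_mix V hunit (φ j) ht1.ne, ← hq] at hle
    -- hle : (1-t)^d * V.det * (1 + t*(1-t)⁻¹*q) ≤ V.det
    have hdd : (1-t)^d = (1-t)^(d-1) * (1-t) := by
      rw [← pow_succ, Nat.sub_add_cancel (Nat.one_le_iff_ne_zero.mpr hd)]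
    have hexp : (1-t)^d * (1 + t*(1-t)⁻¹*q) = (1-t)^(d-1) * ((1-t) + t*q) := by
      rw [hdd]
      field_simp
    have h6 : (1-t)^d * (1 + t*(1-t)⁻¹*q) * V.det ≤ 1 * V.det := by
      calc (1-t)^d * (1 + t*(1-t)⁻¹*q) * V.det
          = (1-t)^d * V.det * (1 + t*(1-t)⁻¹*q) := by ring
        _ ≤ V.det := hle
        _ = 1 * V.det := by ring
    rw [← hexp]
    exact le_of_mul_le_mul_right h6 hVpos
  -- Bernoulli: (1 - (d-1)*t) ≤ (1-t)^(d-1)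
  set c : ℝ := ((d:ℝ) - 1) * (q - 1) with hc
  have hq1 : (1:ℝ) < q := lt_of_le_of_lt hd1 hqd
  have hc0 : 0 ≤ c := mul_nonneg (by linarith) (by linarith)
  set ε : ℝ := q - (d:ℝ) with hε
  have hε0 : 0 < ε := by simp [hε]; linarith
  set t : ℝ := ε / (c + ε + 1) with htdef
  have hden : (0:ℝ) < c + ε + 1 := by linarith
  have ht0 : 0 < t := div_pos hε0 hden
  have ht1 : t < 1 := by
    rw [htdef, div_lt_one hden]; linarith
  have hkey := key t ht0.le ht1
  have hbern : 1 - ((d:ℝ) - 1) * t ≤ (1-t)^(d-1) := by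
    have h2 : (-2:ℝ) ≤ -t := by linarith
    have := one_add_mul_le_pow h2 (d-1)
    have hcast : ((d-1 : ℕ) : ℝ) = (d:ℝ) - 1 := by
      rw [Nat.cast_sub (Nat.one_le_iff_ne_zero.mpr hd)]; norm_num
    calc 1 - ((d:ℝ) - 1) * t = 1 + ((d-1:ℕ):ℝ) * (-t) := by rw [hcast]; ring
      _ ≤ (1 + (-t))^(d-1) := one_add_mul_le_pow h2 (d-1)
      _ = (1-t)^(d-1) := by ring_nf
  have hpos2 : 0 ≤ (1-t) + t*q := by nlinarith
  have hchain : (1 - ((d:ℝ) - 1) * t) * ((1-t) + t*q) ≤ 1 :=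
    le_trans (mul_le_mul_of_nonneg_right hbern hpos2) hkey
  -- expand: 1 + t*(q - d) - t^2*c ≤ 1, i.e. ε ≤ t*c
  have hexpand : (1 - ((d:ℝ) - 1) * t) * ((1-t) + t*q) = 1 + t * (ε - t*c) := by
    rw [hε, hc]; ring
  have h5 : t * (ε - t*c) ≤ 0 := by rw [hexpand] at hchain; linarith
  have hεtc : ε ≤ t * c := by
    by_contra h7
    push_neg at h7
    have h8 : 0 < t * (ε - t*c) := mul_pos ht0 (by linarith)
    linarith
  -- but t*c < ε by the choice of t
  have : t * c < ε := by
    rw [htdef, div_mul_eq_mul_div, div_lt_iff₀ hden]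
    nlinarith
  linarith
end

section
/- Let X be a nonempty finite set, let q : X → ℝ be a probability mass function with q(x) > 0 for all x ∈ X, let r : X → ℝ, and let β > 0. Define Z = Σ_{x∈X} q(x) exp(r(x)/β) and p*(x) = q(x) exp(r(x)/β) / Z. Then for all x^w, x^l ∈ X, β·log(p*(x^w)/q(x^w)) − β·log(p*(x^l)/q(x^l)) = r(x^w) − r(x^l); in particular the partition function Z cancels, so the Bradley–Terry preference probability σ(r(x^w) − r(x^l)) equals σ( β·log(p*(x^w)/q(x^w)) − β·log(p*(x^l)/q(x^l)) ), where σ(t) = 1/(1+exp(−t)) is the logistic sigmoid. -/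
open Finset Real

/-- The logistic sigmoid `σ(t) = 1 / (1 + exp (−t))`. -/
noncomputable def sigmoid (t : ℝ) : ℝ := 1 / (1 + Real.exp (-t))

/-- **DPO reward reparameterization identity.**
Let `X` be a nonempty finite set, `q` a probability mass function with `q x > 0` for all
`x`, `r : X → ℝ`, `β > 0`, and let `p* x = q x * exp (r x / β) / Z` with
`Z = Σ x, q x * exp (r x / β)`. Then for all `xw, xl ∈ X`,
`β·log(p* xw / q xw) − β·log(p* xl / q xl) = r xw − r xl`; in particular the partition
function cancels, so the Bradley–Terry preference probability `σ(r xw − r xl)` equals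
`σ(β·log(p* xw / q xw) − β·log(p* xl / q xl))`. -/
theorem dpo_reward_reparameterization
    {X : Type*} [Fintype X] [Nonempty X] (q r : X → ℝ)
    (hq : ∀ x, 0 < q x) (hq1 : ∑ x, q x = 1) (β : ℝ) (hβ : 0 < β)
    (Z : ℝ) (hZ : Z = ∑ x, q x * Real.exp (r x / β))
    (pstar : X → ℝ) (hpstar : ∀ x, pstar x = q x * Real.exp (r x / β) / Z)
    (xw xl : X) :
    β * Real.log (pstar xw / q xw) - β * Real.log (pstar xl / q xl) = r xw - r xl ∧
    _root_.sigmoid (r xw - r xl) =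
      _root_.sigmoid (β * Real.log (pstar xw / q xw) - β * Real.log (pstar xl / q xl)) := by
  have hZpos : 0 < Z := by
    rw [hZ]
    exact Finset.sum_pos (fun x _ => mul_pos (hq x) (Real.exp_pos _)) Finset.univ_nonempty
  have key : ∀ x, β * Real.log (pstar x / q x) = r x - β * Real.log Z := by
    intro x
    have : pstar x / q x = Real.exp (r x / β) / Z := by
      rw [hpstar x]
      have h1 := (hq x).ne'
      have h2 := hZpos.ne'
      field_simp
    rw [this, Real.log_div (Real.exp_ne_zero _) (ne_of_gt hZpos), Real.log_exp]
    field_simp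
  constructor
  · rw [key, key]; ring
  · rw [key, key]; ring_nf
end
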